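/- Let M ⊂ ℝ³ be the paraboloid z = x² + y² and f the restriction of z² to M. Then the Laplace–Beltrami operator of M applied to f satisfies, in polar coordinates φ(ρ,θ) = (ρcosθ, ρsinθ, ρ²), Δf = 4ρ²(3+8ρ²)/(1+4ρ²)² + 4ρ²/(1+4ρ²), and d(Δf)/dρ = 8ρ(3+4ρ²)/(1+4ρ²)³ + 8ρ/(1+4ρ²)² > 0 for ρ > 0; hence ∇f(Δf) > 0 away from the origin and Δf is non-decreasing along the orbits of ∇f. -/

import Mathlib

open Real

/-- The value of the Laplace–Beltrami operator of the paraboloid applied to f = z²|_M,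
in the polar coordinates ψ(ρ,θ) = (ρcosθ, ρsinθ, ρ²):
Δf = 4ρ²(3+8ρ²)/(1+4ρ²)² + 4ρ²/(1+4ρ²). -/
noncomputable def lapf (ρ : ℝ) : ℝ :=
  4 * ρ ^ 2 * (3 + 8 * ρ ^ 2) / (1 + 4 * ρ ^ 2) ^ 2 + 4 * ρ ^ 2 / (1 + 4 * ρ ^ 2)

/-- On the paraboloid z = x² + y² with f = z²|_M, in polar coordinates (with first
fundamental form E = 1+4ρ², F = 0, G = ρ², so √(EG) = ρ√(1+4ρ²) and ∂ρ(f∘ψ) = 4ρ³),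
the Laplace–Beltrami formula Δf = (1/√(EG)) ∂ρ(√(EG)·(∂ρf)/E) gives
Δf = 4ρ²(3+8ρ²)/(1+4ρ²)² + 4ρ²/(1+4ρ²); moreover
d(Δf)/dρ = 8ρ(3+4ρ²)/(1+4ρ²)³ + 8ρ/(1+4ρ²)² > 0 for ρ > 0, hence
∇f(Δf) = (4ρ³/(1+4ρ²))·d(Δf)/dρ > 0 away from the origin, so Δf is non-decreasing along
the orbits of ∇f. -/
theorem stmt_16 :
    -- the Laplace–Beltrami computation: ∂ρ(√(EG)·(∂ρf)/E) = √(EG)·Δf,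
    -- where √(EG)·(∂ρf)/E = ρ·4ρ³/√(1+4ρ²)
    (∀ ρ : ℝ, 0 < ρ →
      HasDerivAt (fun r : ℝ => r * (4 * r ^ 3) / Real.sqrt (1 + 4 * r ^ 2))
        (ρ * Real.sqrt (1 + 4 * ρ ^ 2) * lapf ρ) ρ) ∧
    -- the derivative of Δf in ρ, and its positivity
    (∀ ρ : ℝ, 0 < ρ →
      HasDerivAt lapf
        (8 * ρ * (3 + 4 * ρ ^ 2) / (1 + 4 * ρ ^ 2) ^ 3 + 8 * ρ / (1 + 4 * ρ ^ 2) ^ 2) ρ ∧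
      0 < 8 * ρ * (3 + 4 * ρ ^ 2) / (1 + 4 * ρ ^ 2) ^ 3 + 8 * ρ / (1 + 4 * ρ ^ 2) ^ 2) ∧
    -- hence ∇f(Δf) = (4ρ³/(1+4ρ²))·d(Δf)/dρ > 0 for ρ > 0
    (∀ ρ : ℝ, 0 < ρ →
      0 < (4 * ρ ^ 3 / (1 + 4 * ρ ^ 2)) *
        (8 * ρ * (3 + 4 * ρ ^ 2) / (1 + 4 * ρ ^ 2) ^ 3 + 8 * ρ / (1 + 4 * ρ ^ 2) ^ 2)) := by
  refine ⟨?_, ?_, ?_⟩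
  · intro ρ hρ
    have hd : (0:ℝ) < 1 + 4 * ρ ^ 2 := by positivity
    have hu0 : (0:ℝ) < Real.sqrt (1 + 4 * ρ ^ 2) := Real.sqrt_pos.mpr hd
    have hu2 : Real.sqrt (1 + 4 * ρ ^ 2) ^ 2 = 1 + 4 * ρ ^ 2 :=
      Real.sq_sqrt hd.le
    have hnum : HasDerivAt (fun r : ℝ => r * (4 * r ^ 3)) (16 * ρ ^ 3) ρ := by
      have : HasDerivAt (fun r : ℝ => r * (4 * r ^ 3)) (1 * (4 * ρ ^ 3) + ρ * (4 * (3 * ρ ^ 2))) ρ := by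
        exact (hasDerivAt_id ρ).mul (((hasDerivAt_pow 3 ρ)).const_mul 4)
      convert this using 1; ring
    have hin : HasDerivAt (fun r : ℝ => 1 + 4 * r ^ 2) (8 * ρ) ρ := by
      have : HasDerivAt (fun r : ℝ => 1 + 4 * r ^ 2) (0 + 4 * (2 * ρ ^ 1)) ρ :=
        (hasDerivAt_const ρ 1).add ((hasDerivAt_pow 2 ρ).const_mul 4)
      convert this using 1; ring
    have hsqrt : HasDerivAt (fun r : ℝ => Real.sqrt (1 + 4 * r ^ 2))
        (8 * ρ / (2 * Real.sqrt (1 + 4 * ρ ^ 2))) ρ := hin.sqrt hd.ne'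
    have hdiv : HasDerivAt (fun r : ℝ => r * (4 * r ^ 3) / Real.sqrt (1 + 4 * r ^ 2)) _ ρ := hnum.fun_div hsqrt hu0.ne'
    convert hdiv using 1
    rw [lapf]
    set u := Real.sqrt (1 + 4 * ρ ^ 2)
    field_simp
    linear_combination (32*(1+3*ρ^2)*(u^2+(1+4*ρ^2)) - 32*(1+4*ρ^2)^2) * hu2
  · intro ρ hρ
    have hd : (0:ℝ) < 1 + 4 * ρ ^ 2 := by positivity
    constructor
    · have h1 : HasDerivAt (fun r : ℝ => 4 * r ^ 2 * (3 + 8 * r ^ 2)) (24 * ρ + 128 * ρ ^ 3) ρ := by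
        have : HasDerivAt (fun r : ℝ => 4 * r ^ 2 * (3 + 8 * r ^ 2))
            ((4 * (2 * ρ ^ 1)) * (3 + 8 * ρ ^ 2) + 4 * ρ ^ 2 * (0 + 8 * (2 * ρ ^ 1))) ρ :=
          (((hasDerivAt_pow 2 ρ).const_mul 4).mul
            ((hasDerivAt_const ρ 3).add ((hasDerivAt_pow 2 ρ).const_mul 8)))
        convert this using 1; ring
      have h2 : HasDerivAt (fun r : ℝ => (1 + 4 * r ^ 2) ^ 2) (16 * ρ * (1 + 4 * ρ ^ 2)) ρ := by
        have hin : HasDerivAt (fun r : ℝ => 1 + 4 * r ^ 2) (8 * ρ) ρ := by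
          have : HasDerivAt (fun r : ℝ => 1 + 4 * r ^ 2) (0 + 4 * (2 * ρ ^ 1)) ρ :=
            (hasDerivAt_const ρ 1).add ((hasDerivAt_pow 2 ρ).const_mul 4)
          convert this using 1; ring
        have : HasDerivAt (fun r : ℝ => (1 + 4 * r ^ 2) ^ 2) (((2:ℕ):ℝ) * (1 + 4 * ρ ^ 2) ^ (2 - 1) * (8 * ρ)) ρ := hin.pow 2
        convert this using 1; ring
      have h3 : HasDerivAt (fun r : ℝ => 4 * r ^ 2) (8 * ρ) ρ := by
        have : HasDerivAt (fun r : ℝ => 4 * r ^ 2) (4 * (2 * ρ ^ 1)) ρ :=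
          (hasDerivAt_pow 2 ρ).const_mul 4
        convert this using 1; ring
      have h4 : HasDerivAt (fun r : ℝ => 1 + 4 * r ^ 2) (8 * ρ) ρ := by
        have : HasDerivAt (fun r : ℝ => 1 + 4 * r ^ 2) (0 + 4 * (2 * ρ ^ 1)) ρ :=
          (hasDerivAt_const ρ 1).add ((hasDerivAt_pow 2 ρ).const_mul 4)
        convert this using 1; ring
      have hA := h1.fun_div h2 (by positivity)
      have hB := h3.fun_div h4 hd.ne'
      have : HasDerivAt lapf _ ρ := hA.add hB
      convert this using 1
      field_simp
      ring
    · positivity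
  · intro ρ hρ
    have hd : (0:ℝ) < 1 + 4 * ρ ^ 2 := by positivity
    positivity
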